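/- For every set X ⊆ ω₁ all of whose elements are greater than 6, there exists a simple pattern (su, sp) over ω₁ such that for every ζ with 6 < ζ < ω₁, the quadruple {3,5,6,ζ} belongs to su if and only if ζ ∈ X. (In particular, every quadruple appearing in the Suslin column of the simplicity table, together with all its nonempty subsets, can be placed in su while every tuple of the special column, together with all its supersets, is placed in sp: the two resulting families are disjoint.) -/

import Mathlib

noncomputable section

open Cardinal Set

/-- The first uncountable ordinal. -/
def omega1 : Ordinal.{0} := (Cardinal.aleph 1).ord

universe u v w

/-- A carrier together with a strict order relation and a level function. -/
structure PreTree (α : Type u) where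
  lt : α → α → Prop
  lev : α → Ordinal.{u_1}

namespace PreTree

variable {α : Type u}

/-- reflexive closure of the tree order -/
def le (T : PreTree α) (x y : α) : Prop := x = y ∨ T.lt x y

/-- tree axioms: the relation is transitive, the level function is strictly increasing,
the predecessors of any node are linearly ordered and there is exactly one predecessor
at each smaller level (so the predecessors are well-ordered of order type `lev x`). -/
def IsTree (T : PreTree α) : Prop :=
  (∀ x y z, T.lt x y → T.lt y z → T.lt x z) ∧
  (∀ x y, T.lt x y → T.lev x < T.lev y) ∧
  (∀ x y z, T.lt y x → T.lt z x → y = z ∨ T.lt y z ∨ T.lt z y) ∧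
  (∀ x o, o < T.lev x → ∃! y, T.lt y x ∧ T.lev y = o)

/-- an ω₁-tree: height ω₁, countable nonempty levels, each node has ℵ₀ many
immediate successors and extensions in every higher level below ω₁. -/
def IsOmega1Tree (T : PreTree α) : Prop :=
  T.IsTree ∧
  (∀ x, T.lev x < omega1) ∧
  (∀ o, o < omega1 → {x | T.lev x = o}.Countable) ∧
  (∀ o, o < omega1 → ∃ x, T.lev x = o) ∧
  (∀ x, {y | T.lt x y ∧ T.lev y = T.lev x + 1}.Infinite) ∧
  (∀ x o, T.lev x < o → o < omega1 → ∃ y, T.lt x y ∧ T.lev y = o)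

def IsAntichain' (T : PreTree α) (s : Set α) : Prop :=
  ∀ x ∈ s, ∀ y ∈ s, x ≠ y → ¬ T.lt x y ∧ ¬ T.lt y x

def IsChain' (T : PreTree α) (s : Set α) : Prop :=
  ∀ x ∈ s, ∀ y ∈ s, x = y ∨ T.lt x y ∨ T.lt y x

/-- a Suslin tree: an ω₁-tree with no uncountable antichain -/
def Suslin (T : PreTree α) : Prop :=
  T.IsOmega1Tree ∧ ∀ s : Set α, T.IsAntichain' s → s.Countable

/-- an Aronszajn tree: an ω₁-tree with no uncountable chain -/
def Aronszajn (T : PreTree α) : Prop :=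
  T.IsOmega1Tree ∧ ∀ s : Set α, T.IsChain' s → s.Countable

/-- a special tree: there is an order preserving map into ℚ -/
def Special (T : PreTree α) : Prop :=
  ∃ f : α → ℚ, ∀ x y, T.lt x y → f x < f y

end PreTree

/-- the carrier of the product of a family of trees: tuples of nodes of a common level -/
abbrev ProdCarrier {ι : Type u} {β : ι → Type v} (A : ∀ i, PreTree (β i)) : Type (max u v) :=
  {f : ∀ i, β i // ∃ o, ∀ i, (A i).lev (f i) = o}

/-- the product of a family of trees, ordered coordinatewise -/
def prodTree {ι : Type u} {β : ι → Type v} (A : ∀ i, PreTree (β i)) :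
    PreTree (ProdCarrier A) where
  lt f g := ∀ i, (A i).lt (f.1 i) (g.1 i)
  lev f := ⨆ i, (A i).lev (f.1 i)

/-- the carrier of the product of two trees -/
abbrev ProdCarrier₂ {α : Type u} {β : Type v} (A : PreTree α) (B : PreTree β) : Type (max u v) :=
  {p : α × β // A.lev p.1 = B.lev p.2}

/-- the product of two trees -/
def prodTree₂ {α : Type u} {β : Type v} (A : PreTree α) (B : PreTree β) :
    PreTree (ProdCarrier₂ A B) where
  lt p q := A.lt p.1.1 q.1.1 ∧ B.lt p.1.2 q.1.2
  lev p := A.lev p.1.1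

abbrev ConeCarrier {α : Type u} (T : PreTree α) (a : α) : Type u := {x : α // x = a ∨ T.lt a x}

/-- the subtree `T_a` of all extensions of `a`, with levels shifted to start at `0` -/
def cone {α : Type u} (T : PreTree α) (a : α) : PreTree (ConeCarrier T a) where
  lt x y := T.lt x.1 y.1
  lev x := T.lev x.1 - T.lev a

/-- the derived tree determined by a tuple of (distinct, same-level) nodes:
the product of the cones above the nodes -/
def derivedTree {α : Type u} (T : PreTree α) {n : ℕ} (a : Fin (n+1) → α) :
    PreTree (ProdCarrier (fun i => cone T (a i))) :=
  prodTree (fun i => cone T (a i))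

/-- every derived tree of `T` is a Suslin tree -/
def AllDerivedSuslin {α : Type u} (T : PreTree α) : Prop :=
  ∀ (n : ℕ) (a : Fin (n+1) → α), Function.Injective a →
    (∀ i, T.lev (a i) = T.lev (a 0)) → (derivedTree T a).Suslin

/-- carrier of the disjoint union of the trees with indices in the finite set `d` -/
abbrev UnionCarrier {I : Type u} (β : I → Type v) (d : Finset I) : Type (max u v) :=
  {p : Sigma β // p.1 ∈ d}

/-- the disjoint union of the trees with indices in `d` -/
def unionTree {I : Type u} {β : I → Type v} (A : ∀ ζ, PreTree (β ζ)) (d : Finset I) :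
    PreTree (UnionCarrier β d) where
  lt x y := ∃ h : x.1.1 = y.1.1, (A y.1.1).lt (cast (congrArg β h) x.1.2) y.1.2
  lev x := (A x.1.1).lev x.1.2

/-! clubs, stationary sets and the diamond principle on ω₁ -/

/-- `C` is a closed unbounded subset of ω₁ -/
def IsClubO1 (C : Set Ordinal) : Prop :=
  (∀ c ∈ C, c < omega1) ∧
  (∀ o, o < omega1 → ∃ c ∈ C, o ≤ c) ∧
  (∀ o, o < omega1 → o ≠ 0 → (∀ b, o ≠ b + 1) →
    (∀ b, b < o → ∃ c ∈ C, b ≤ c ∧ c < o) → o ∈ C)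

/-- `S` is stationary in ω₁ -/
def StationaryO1 (S : Set Ordinal) : Prop :=
  ∀ C, IsClubO1 C → (S ∩ C).Nonempty

/-- the diamond principle ◇ on ω₁ -/
def DiamondO1 : Prop :=
  ∃ S : Ordinal → Set Ordinal,
    (∀ ξ, S ξ ⊆ Set.Iio ξ) ∧
    ∀ X : Set Ordinal, X ⊆ Set.Iio omega1 →
      StationaryO1 {ξ | ξ < omega1 ∧ X ∩ Set.Iio ξ = S ξ}

/-! ω₁-like orders, parity, patterns -/

/-- `j` is the immediate successor of `i` -/
def ISucc {I : Type u} [LinearOrder I] (i j : I) : Prop :=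
  i < j ∧ ∀ k, i < k → j ≤ k

/-- `j` is the `n`-th iterated immediate successor of `i` -/
def IterSucc {I : Type u} [LinearOrder I] : ℕ → I → I → Prop
  | 0, i, j => i = j
  | n+1, i, j => ∃ k, IterSucc n i k ∧ ISucc k j

/-- `i` is a limit point: not an immediate successor (least elements count as limits) -/
def ILimit {I : Type u} [LinearOrder I] (i : I) : Prop := ¬ ∃ j, ISucc j i

/-- `i` is even: of the form `δ + n` with `δ` a limit and `n` even -/
def IEven {I : Type u} [LinearOrder I] (i : I) : Prop :=
  ∃ (δ : I) (n : ℕ), ILimit δ ∧ Even n ∧ IterSucc n δ i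

/-- `i` is odd: of the form `δ + n` with `δ` a limit and `n` odd -/
def IOdd {I : Type u} [LinearOrder I] (i : I) : Prop :=
  ∃ (δ : I) (n : ℕ), ILimit δ ∧ Odd n ∧ IterSucc n δ i

/-- an ω₁-like order: uncountable, proper initial segments countable,
with a least element, and every element has an immediate successor -/
def IsOmega1Like (I : Type u) [LinearOrder I] : Prop :=
  ¬ (Set.univ : Set I).Countable ∧
  (∀ i : I, {j | j < i}.Countable) ∧
  (∃ b : I, ∀ i, b ≤ i) ∧
  (∀ i : I, ∃ j, ISucc i j)

/-- the initial segment below `δ` is well-ordered, of order type `ot` -/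
def SegType {I : Type u} [LinearOrder I] (δ : I) (ot : Ordinal.{0}) : Prop :=
  ∃ h : IsWellOrder {j : I // j < δ} (fun a b => a < b),
    @Ordinal.type {j : I // j < δ} (fun a b => a < b) h = Ordinal.lift.{u, 0} ot

open Classical in
/-- the finite set `{a, b, c, d}` -/
def quadF {I : Type u} (a b c d : I) : Finset I := {a, b, c, d}

/-- a pattern over `I`: `sp` consists of nonempty finite subsets of `I` closed under
supersets, and `su` is its complement among the nonempty finite subsets -/
def IsPatternI {I : Type u} (su sp : Set (Finset I)) : Prop :=
  (∀ e ∈ sp, e.Nonempty) ∧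
  (∀ e ∈ sp, ∀ e' : Finset I, e ⊆ e' → e' ∈ sp) ∧
  su = {e | e.Nonempty ∧ e ∉ sp}

/-- `E` assigns to each countable limit ordinal `δ ≠ 0` a canonical code `E δ ⊆ ω`
of a well-order of ω of order type `δ` -/
def GoodCodes (E : Ordinal → Set ℕ) : Prop :=
  E 0 = ∅ ∧
  ∀ δ : Ordinal, δ < omega1 → δ ≠ 0 → (∀ b, δ ≠ b + 1) →
    ∃ (r : ℕ → ℕ → Prop) (h : IsWellOrder ℕ r),
      @Ordinal.type ℕ r h = δ ∧ E δ = {m | ∃ a b, r a b ∧ m = Nat.pair a b}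

/-- a simple pattern: the pattern respects the "simplicity table" -/
def IsSimplePatternI (I : Type u) [LinearOrder I] (E : Ordinal → Set ℕ)
    (su sp : Set (Finset I)) : Prop :=
  IsPatternI su sp ∧
  -- Suslin column: all triples, pairs and singletons
  (∀ e : Finset I, e.Nonempty → e.card ≤ 3 → e ∈ su) ∧
  -- Suslin column: quadruples
  (∀ ζ₁ ζ₂ ζ₃ ζ₄ : I, ζ₁ < ζ₂ → ζ₂ < ζ₃ → ζ₃ < ζ₄ →
    ((IEven ζ₁ ∧ IEven ζ₂ ∧ IEven ζ₃ ∧ IEven ζ₄) ∨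
     (IOdd ζ₁ ∧ IOdd ζ₂ ∧ IOdd ζ₃ ∧ IOdd ζ₄) ∨
     (IOdd ζ₁ ∧ IEven ζ₂ ∧ IOdd ζ₃ ∧ IEven ζ₄) ∨
     (IOdd ζ₁ ∧ IEven ζ₂ ∧ IEven ζ₃ ∧ IOdd ζ₄) ∨
     (ILimit ζ₁ ∧ IEven ζ₂ ∧ IOdd ζ₃ ∧ IOdd ζ₄) ∨
     (ISucc ζ₁ ζ₂ ∧ IOdd ζ₃ ∧ IOdd ζ₄)) →
    quadF ζ₁ ζ₂ ζ₃ ζ₄ ∈ su) ∧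
  (∀ (δ : I) (ot : Ordinal) (i : ℕ) (x1 x3 x4 xi : I),
    ILimit δ → SegType δ ot →
    IterSucc 1 δ x1 → IterSucc 3 δ x3 → IterSucc 4 δ x4 → IterSucc (5+i) δ xi →
    i ∈ E ot → quadF x1 x3 x4 xi ∈ su) ∧
  -- special column: all quintuples (and larger sets)
  (∀ e : Finset I, 5 ≤ e.card → e ∈ sp) ∧
  -- special column: quadruples
  (∀ ζ₁ ζ₂ ζ₃ ζ₄ : I, ζ₁ < ζ₂ → ζ₂ < ζ₃ → ζ₃ < ζ₄ →
    ((IEven ζ₁ ∧ IOdd ζ₂ ∧ IEven ζ₃ ∧ IOdd ζ₄) ∨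
     (IOdd ζ₁ ∧ IEven ζ₂ ∧ IEven ζ₃ ∧ IEven ζ₄) ∨
     (IEven ζ₁ ∧ ¬ ILimit ζ₁ ∧ IEven ζ₂ ∧ IOdd ζ₃ ∧ IOdd ζ₄) ∨
     (((IEven ζ₁ ∧ IOdd ζ₂) ∨ (IOdd ζ₁ ∧ IEven ζ₂)) ∧ ¬ ISucc ζ₁ ζ₂ ∧ IOdd ζ₃ ∧ IOdd ζ₄)) →
    quadF ζ₁ ζ₂ ζ₃ ζ₄ ∈ sp) ∧
  (∀ (δ : I) (ot : Ordinal) (i : ℕ) (x1 x3 x4 xi : I),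
    ILimit δ → SegType δ ot →
    IterSucc 1 δ x1 → IterSucc 3 δ x3 → IterSucc 4 δ x4 → IterSucc (5+i) δ xi →
    i ∉ E ot → quadF x1 x3 x4 xi ∈ sp)

/-- the ordinals below ω₁, as a linear order -/
abbrev O1 : Type 1 := {o : Ordinal // o < omega1}

theorem nat_lt_omega1 (n : ℕ) : (n : Ordinal) < omega1 := by
  have h1 : (n : Ordinal) < Ordinal.omega0 := Ordinal.nat_lt_omega0 n
  have h2 : Ordinal.omega0 ≤ omega1 := by
    rw [← Cardinal.ord_aleph0]
    exact Cardinal.ord_le_ord.mpr (Cardinal.aleph0_le_aleph 1)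
  exact h1.trans_le h2

/-- the natural number `n` as an element of `O1` -/
def o1 (n : ℕ) : O1 := ⟨(n : Ordinal), nat_lt_omega1 n⟩

/-- the sequence of trees realizes the pattern `(su, sp)`: for `d ∈ su` the disjoint
union `T^d` and all of its derived trees are Suslin, and for `d ∈ sp` the full
product `T^(d)` is special -/
def HasPattern {I : Type u} {β : I → Type v} (A : ∀ ζ, PreTree (β ζ))
    (su sp : Set (Finset I)) : Prop :=
  (∀ d ∈ su, (unionTree A d).Suslin ∧ AllDerivedSuslin (unionTree A d)) ∧
  (∀ d ∈ sp, (prodTree (fun ζ : {x // x ∈ d} => A ζ.1)).Special)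

/-- a club-embedding of `A` into `B`: a level-preserving order-embedding defined on
the restriction of `A` to a club set of levels -/
def ClubEmbeds {α : Type u} {β : Type v} (A : PreTree α) (B : PreTree β) : Prop :=
  ∃ C : Set Ordinal, IsClubO1 C ∧
    ∃ h : {x : α // A.lev x ∈ C} → β,
      Function.Injective h ∧
      (∀ x, B.lev (h x) = A.lev x.1) ∧
      (∀ x y, A.lt x.1 y.1 ↔ B.lt (h x) (h y))

/-- the collection `{T^d : d ∈ su}` is primal: every derived tree of every member is
Suslin, and every Suslin tree contains a club-embedded copy of a derived tree of a member -/
def Primal {I : Type u} {β : I → Type v} (A : ∀ ζ, PreTree (β ζ)) (su : Set (Finset I)) : Prop :=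
  (∀ d ∈ su, (unionTree A d).Suslin ∧ AllDerivedSuslin (unionTree A d)) ∧
  ∀ (γ : Type w) (S : PreTree γ), S.Suslin →
    ∃ d ∈ su, ∃ (n : ℕ) (a : Fin (n+1) → UnionCarrier β d),
      Function.Injective a ∧
      (∀ i, (unionTree A d).lev (a i) = (unionTree A d).lev (a 0)) ∧
      ClubEmbeds (derivedTree (unionTree A d) a) S

/-! the specializing poset S(T) -/

/-- domain of a partial function into ℚ -/
def pdom {α : Type u} (h : α → Option ℚ) : Set α := {x | h x ≠ none}

/-- the finite function `h` (living on level ≥ a) bounds the approximation `f`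
(with `last f = a`): on each point of its domain it is strictly above the value of `f`
at the unique level-`a` restriction of the point -/
def Bounds {α : Type u} (T : PreTree α) (a : Ordinal) (f h : α → Option ℚ) : Prop :=
  ∀ x q, h x = some q → ∃ y r, T.le y x ∧ T.lev y = a ∧ f y = some r ∧ r < q

/-- a requirement of height `γ` and arity `n` -/
def IsRequirement {α : Type u} (T : PreTree α) (γ : Ordinal) (n : ℕ)
    (H : Set (α → Option ℚ)) : Prop :=
  ∀ h ∈ H, (pdom h).Finite ∧ (pdom h).ncard = n ∧ ∀ x ∈ pdom h, T.lev x = γ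

/-- the requirement `H` of height `γ` is dispersed -/
def DispersedReq {α : Type u} (T : PreTree α) (γ : Ordinal) (H : Set (α → Option ℚ)) : Prop :=
  ∀ t : Set α, t.Finite → t ⊆ {x | T.lev x = γ} → ∃ h ∈ H, ∀ x ∈ t, h x = none

/-- `h'` is the restriction `h↾γ` of the finite function `h` to level `γ`:
`h'(x↾γ) = h(x)` -/
def IsRestrictTo {α : Type u} (T : PreTree α) (γ : Ordinal) (h h' : α → Option ℚ) : Prop :=
  (∀ y, h' y ≠ none ↔ (T.lev y = γ ∧ ∃ x, T.le y x ∧ h x ≠ none)) ∧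
  (∀ y x, T.lev y = γ → T.le y x → h x ≠ none → h' y = h x)

/-- the approximation `f` (with `last f = a`) fulfills the requirement `H` of height `a` -/
def FulfillsReq {α : Type u} (T : PreTree α) (a : Ordinal) (f : α → Option ℚ)
    (H : Set (α → Option ℚ)) : Prop :=
  ∀ t : Set α, t.Finite → t ⊆ {x | T.lev x = a} →
    ∃ h ∈ H, Bounds T a f h ∧ ∀ x ∈ t, h x = none

/-- an approximation: a partial specializing function defined exactly on the nodes of
level ≤ a -/
def IsApprox {α : Type u} (T : PreTree α) (a : Ordinal) (f : α → Option ℚ) : Prop :=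
  a < omega1 ∧
  (∀ x, f x ≠ none ↔ T.lev x ≤ a) ∧
  (∀ x y qx qy, T.lt x y → f x = some qx → f y = some qy → qx < qy)

/-- a promise with base `b`: countable nonempty coherent sets of dispersed requirements,
one for each level `γ` with `b ≤ γ < ω₁`, all of one fixed arity -/
def IsPromise {α : Type u} (T : PreTree α) (b : Ordinal)
    (Γ : Ordinal → Set (Set (α → Option ℚ))) : Prop :=
  b < omega1 ∧
  (∃ n : ℕ, ∀ γ, b ≤ γ → γ < omega1 → ∀ H ∈ Γ γ, IsRequirement T γ n H) ∧
  (∀ γ, b ≤ γ → γ < omega1 →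
    (Γ γ).Countable ∧ (Γ γ).Nonempty ∧ ∀ H ∈ Γ γ, DispersedReq T γ H) ∧
  (∀ γ₀ γ₁, b ≤ γ₀ → γ₀ < γ₁ → γ₁ < omega1 →
    Γ γ₀ = {H' | ∃ H ∈ Γ γ₁, H' = {h' | ∃ h ∈ H, IsRestrictTo T γ₀ h h'}})

/-- a condition of the specializing poset `S(T)`: an approximation together with a
promise which it fulfills -/
structure SCond {α : Type u} (T : PreTree α) where
  last : Ordinal
  f : α → Option ℚ
  base : Ordinal
  Γ : Ordinal → Set (Set (α → Option ℚ))
  approx : IsApprox T last f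
  promise : IsPromise T base Γ
  base_le : base ≤ last
  fulfills : ∀ H ∈ Γ last, FulfillsReq T last f H

/-- `q` extends `p` in `S(T)` -/
def SExtends {α : Type u} {T : PreTree α} (q p : SCond T) : Prop :=
  p.last ≤ q.last ∧
  (∀ x, p.f x ≠ none → q.f x = p.f x) ∧
  ∀ γ, q.last ≤ γ → γ < omega1 → p.Γ γ ⊆ q.Γ γ

/-! the naive specializing poset S₂(T) -/

/-- a condition of the poset `S₂(T)` -/
def IsS2Cond {α : Type u} (T : PreTree α) (a : Ordinal) (f : α → Option ℚ) : Prop :=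
  IsApprox T a f ∧
  ∀ a₀, a₀ < a → ∀ (n : ℕ) (x : Fin (n+1) → α) (q : Fin (n+1) → ℚ),
    (∀ i, T.lev (x i) = a₀) →
    (∀ i, ∃ r, f (x i) = some r ∧ r < q i) →
    ∃ y : Fin (n+1) → α, ∀ i, T.lt (x i) (y i) ∧ T.lev (y i) = a ∧ f (y i) = some (q i)

/-- the disjoint union of two trees -/
def sumTree {α : Type u} {β : Type v} (A : PreTree α) (B : PreTree β) : PreTree (α ⊕ β) where
  lt x y :=
    match x, y with
    | Sum.inl a, Sum.inl b => A.lt a b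
    | Sum.inr a, Sum.inr b => B.lt a b
    | _, _ => False
  lev := Sum.elim A.lev B.lev


namespace SPE

lemma succ_lt_omega1 {o : Ordinal} (h : o < omega1) : o + 1 < omega1 := by
  rw [Ordinal.add_one_eq_succ]
  exact (Cardinal.isSuccLimit_ord (Cardinal.aleph0_le_aleph 1)).succ_lt h

lemma isucc_iff (i j : O1) : ISucc i j ↔ j.1 = i.1 + 1 := by
  constructor
  · rintro ⟨h1, h2⟩
    have hk : i < (⟨i.1 + 1, succ_lt_omega1 i.2⟩ : O1) := by
      rw [← Subtype.coe_lt_coe]; exact lt_add_one _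
    have := h2 _ hk
    have h3 : i.1 + 1 ≤ j.1 := by
      rw [Ordinal.add_one_eq_succ, Order.succ_le_iff]; exact Subtype.coe_lt_coe.mpr h1
    exact le_antisymm (Subtype.coe_le_coe.mpr this) h3
  · intro h
    constructor
    · rw [← Subtype.coe_lt_coe, h]; exact lt_add_one _
    · intro k hk
      rw [← Subtype.coe_le_coe, h, Ordinal.add_one_eq_succ, Order.succ_le_iff]
      exact Subtype.coe_lt_coe.mpr hk

lemma itersucc_iff (n : ℕ) (i j : O1) : IterSucc n i j ↔ j.1 = i.1 + n := by
  induction n generalizing j with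
  | zero => simp [IterSucc, Subtype.ext_iff, eq_comm]
  | succ n ih =>
    constructor
    · rintro ⟨k, hk, hs⟩
      rw [(isucc_iff k j).mp hs, ih k |>.mp hk]
      push_cast; rw [add_assoc]
    · intro h
      have hlt : i.1 + n < omega1 := by
        have h5 : i.1 + (n:Ordinal) < i.1 + ((n+1:ℕ):Ordinal) := by
          push_cast
          exact (add_lt_add_iff_left _).mpr (lt_add_one _)
        exact (h5.trans_le h.symm.le).trans j.2
      refine ⟨⟨i.1 + n, hlt⟩, (ih _).mpr rfl, (isucc_iff _ _).mpr ?_⟩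
      rw [h]; push_cast; rw [add_assoc]

lemma ilimit_iff (i : O1) : ILimit i ↔ ∀ b : Ordinal, i.1 ≠ b + 1 := by
  unfold ILimit
  constructor
  · intro h b hb
    exact h ⟨⟨b, lt_of_le_of_lt (le_of_lt (hb ▸ lt_add_one b)) i.2⟩, (isucc_iff _ _).mpr hb⟩
  · rintro h ⟨j, hj⟩
    exact h j.1 ((isucc_iff j i).mp hj)

lemma ieven_iff (x : O1) : IEven x ↔ ∃ (δ : O1) (n : ℕ), ILimit δ ∧ Even n ∧ x.1 = δ.1 + n := by
  unfold IEven
  constructor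
  · rintro ⟨δ, n, h1, h2, h3⟩; exact ⟨δ, n, h1, h2, (itersucc_iff n δ x).mp h3⟩
  · rintro ⟨δ, n, h1, h2, h3⟩; exact ⟨δ, n, h1, h2, (itersucc_iff n δ x).mpr h3⟩

lemma iodd_iff (x : O1) : IOdd x ↔ ∃ (δ : O1) (n : ℕ), ILimit δ ∧ Odd n ∧ x.1 = δ.1 + n := by
  unfold IOdd
  constructor
  · rintro ⟨δ, n, h1, h2, h3⟩; exact ⟨δ, n, h1, h2, (itersucc_iff n δ x).mp h3⟩
  · rintro ⟨δ, n, h1, h2, h3⟩; exact ⟨δ, n, h1, h2, (itersucc_iff n δ x).mpr h3⟩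

/-- uniqueness of the limit+nat decomposition -/
lemma decomp_unique {δ δ' : O1} {n n' : ℕ} (hδ : ILimit δ) (hδ' : ILimit δ')
    (h : δ.1 + n = δ'.1 + n') : δ.1 = δ'.1 ∧ n = n' := by
  have key : ∀ (a b : O1), ILimit b → a.1 ≤ b.1 → ∀ m : ℕ, b.1 ≤ a.1 + m → a.1 = b.1 := by
    intro a b hb hab m hm
    have hsub := Ordinal.add_sub_cancel_of_le hab
    have hμ : b.1 - a.1 ≤ (m : Ordinal) := by
      rw [← add_le_add_iff_left a.1, hsub]; exact hm
    obtain ⟨k, hk⟩ := Ordinal.lt_omega0.mp (lt_of_le_of_lt hμ (Ordinal.nat_lt_omega0 m))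
    match k, hk with
    | 0, hk => rw [hk] at hsub; simpa using hsub
    | (k+1), hk =>
      exfalso
      refine (ilimit_iff b).mp hb (a.1 + k) ?_
      rw [← hsub, hk]; push_cast; rw [add_assoc]
  rcases le_total δ.1 δ'.1 with hle | hle
  · have he : δ.1 = δ'.1 := key δ δ' hδ' hle n (by rw [h]; exact le_self_add)
    refine ⟨he, ?_⟩
    rw [he] at h
    exact_mod_cast add_right_inj δ'.1 |>.mp h
  · have he : δ'.1 = δ.1 := key δ' δ hδ hle n' (by rw [← h]; exact le_self_add)
    refine ⟨he.symm, ?_⟩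
    rw [he] at h
    exact_mod_cast add_right_inj δ.1 |>.mp h

lemma not_even_and_odd (x : O1) : ¬ (IEven x ∧ IOdd x) := by
  rintro ⟨he, ho⟩
  rw [ieven_iff] at he; rw [iodd_iff] at ho
  obtain ⟨δ, n, h1, h2, h3⟩ := he
  obtain ⟨δ', n', h1', h2', h3'⟩ := ho
  obtain ⟨-, hn⟩ := decomp_unique h1 h1' (h3.symm.trans h3')
  subst hn
  exact (Nat.not_odd_iff_even.mpr h2) h2'

lemma ilimit_even {x : O1} (h : ILimit x) : IEven x :=
  (ieven_iff x).mpr ⟨x, 0, h, Even.zero, by simp⟩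

lemma isucc_even_odd {x y : O1} (hs : ISucc x y) (he : IEven x) : IOdd y := by
  rw [ieven_iff] at he; obtain ⟨δ, n, h1, h2, h3⟩ := he
  exact (iodd_iff y).mpr ⟨δ, n + 1, h1, Even.add_one h2, by
    rw [(isucc_iff x y).mp hs, h3]; push_cast; rw [add_assoc]⟩

lemma ilimit_o1_zero : ILimit (o1 0) := by
  rw [ilimit_iff]
  intro b hb
  simp only [o1, Nat.cast_zero] at hb
  exact (Ordinal.succ_ne_zero b) (by rw [← Ordinal.add_one_eq_succ, ← hb])

lemma iodd_nat {n : ℕ} (h : Odd n) : IOdd (o1 n) :=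
  (iodd_iff _).mpr ⟨o1 0, n, ilimit_o1_zero, h, by simp [o1]⟩

lemma ieven_nat {n : ℕ} (h : Even n) : IEven (o1 n) :=
  (ieven_iff _).mpr ⟨o1 0, n, ilimit_o1_zero, h, by simp [o1]⟩

lemma not_ilimit_nat {n : ℕ} (h : n ≠ 0) : ¬ ILimit (o1 n) := by
  rw [ilimit_iff]
  push_neg
  obtain ⟨m, rfl⟩ := Nat.exists_eq_succ_of_ne_zero h
  exact ⟨m, by simp [o1]⟩

lemma segtype_unique {δ : O1} {ot ot' : Ordinal} (h : SegType δ ot) (h' : SegType δ ot') :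
    ot = ot' := by
  obtain ⟨i1, e1⟩ := h
  obtain ⟨i2, e2⟩ := h'
  have : i1 = i2 := Subsingleton.elim _ _
  subst this
  rw [e1] at e2
  exact Ordinal.lift_inj.mp e2

end SPE

namespace SPE

variable {I : Type u} [LinearOrder I]

lemma quadF_mem_iff {a b c d x : I} : x ∈ quadF a b c d ↔ x = a ∨ x = b ∨ x = c ∨ x = d := by
  simp [quadF]

lemma quadF_eq {a b c d : I} : quadF a b c d = insert a (insert b (insert c ({d} : Finset I))) := by
  ext x; simp [quadF]

lemma quadF_card {a b c d : I} (h1 : a < b) (h2 : b < c) (h3 : c < d) :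
    (quadF a b c d).card = 4 := by
  rw [quadF_eq,Finset.card_insert_of_notMem, Finset.card_insert_of_notMem,
      Finset.card_insert_of_notMem, Finset.card_singleton]
  · simp only [Finset.mem_singleton]; exact h3.ne
  · simp only [Finset.mem_insert, Finset.mem_singleton]
    push_neg
    exact ⟨h2.ne, (h2.trans h3).ne⟩
  · simp only [Finset.mem_insert, Finset.mem_singleton]
    push_neg
    exact ⟨h1.ne, (h1.trans h2).ne, (h1.trans (h2.trans h3)).ne⟩

lemma quadF_nonempty {a b c d : I} : (quadF a b c d).Nonempty :=
  ⟨a, quadF_mem_iff.mpr (Or.inl rfl)⟩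

lemma quadF_inj {a b c d a' b' c' d' : I} (h1 : a < b) (h2 : b < c) (h3 : c < d)
    (h1' : a' < b') (h2' : b' < c') (h3' : c' < d')
    (he : quadF a b c d = quadF a' b' c' d') : a = a' ∧ b = b' ∧ c = c' ∧ d = d' := by
  have mem : ∀ x : I, (x = a ∨ x = b ∨ x = c ∨ x = d) ↔ (x = a' ∨ x = b' ∨ x = c' ∨ x = d') := by
    intro x
    rw [← quadF_mem_iff, ← quadF_mem_iff, he]
  have haa : a = a' := by
    have h4 : a' ≤ a := by
      rcases (mem a).mp (Or.inl rfl) with rfl | rfl | rfl | rfl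
      · exact le_refl _
      · exact h1'.le
      · exact (h1'.trans h2').le
      · exact (h1'.trans (h2'.trans h3')).le
    have h5 : a ≤ a' := by
      rcases (mem a').mpr (Or.inl rfl) with rfl | rfl | rfl | rfl
      · exact le_refl _
      · exact h1.le
      · exact (h1.trans h2).le
      · exact (h1.trans (h2.trans h3)).le
    exact le_antisymm h5 h4
  subst haa
  have hbb : b = b' := by
    have h4 : b' ≤ b := by
      rcases (mem b).mp (Or.inr (Or.inl rfl)) with rfl | rfl | rfl | rfl
      · exact absurd h1 (lt_irrefl _)
      · exact le_refl _
      · exact h2'.le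
      · exact (h2'.trans h3').le
    have h5 : b ≤ b' := by
      rcases (mem b').mpr (Or.inr (Or.inl rfl)) with rfl | rfl | rfl | rfl
      · exact absurd h1' (lt_irrefl _)
      · exact le_refl _
      · exact h2.le
      · exact (h2.trans h3).le
    exact le_antisymm h5 h4
  subst hbb
  have hcc : c = c' := by
    have h4 : c' ≤ c := by
      rcases (mem c).mp (Or.inr (Or.inr (Or.inl rfl))) with rfl | rfl | rfl | rfl
      · exact absurd (h1.trans h2) (lt_irrefl _)
      · exact absurd h2 (lt_irrefl _)
      · exact le_refl _
      · exact h3'.le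
    have h5 : c ≤ c' := by
      rcases (mem c').mpr (Or.inr (Or.inr (Or.inl rfl))) with rfl | rfl | rfl | rfl
      · exact absurd (h1'.trans h2') (lt_irrefl _)
      · exact absurd h2' (lt_irrefl _)
      · exact le_refl _
      · exact h3.le
    exact le_antisymm h5 h4
  subst hcc
  have hdd : d = d' := by
    have h4 : d' ≤ d := by
      rcases (mem d).mp (Or.inr (Or.inr (Or.inr rfl))) with rfl | rfl | rfl | rfl
      · exact absurd (h1.trans (h2.trans h3)) (lt_irrefl _)
      · exact absurd (h2.trans h3) (lt_irrefl _)
      · exact absurd h3 (lt_irrefl _)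
      · exact le_refl _
    have h5 : d ≤ d' := by
      rcases (mem d').mpr (Or.inr (Or.inr (Or.inr rfl))) with rfl | rfl | rfl | rfl
      · exact absurd (h1'.trans (h2'.trans h3')) (lt_irrefl _)
      · exact absurd (h2'.trans h3') (lt_irrefl _)
      · exact absurd h3' (lt_irrefl _)
      · exact le_refl _
    exact le_antisymm h5 h4
  exact ⟨rfl, rfl, rfl, hdd⟩

end SPE

namespace SPE

lemma o1_lt {n m : ℕ} (h : n < m) : o1 n < o1 m :=
  Subtype.coe_lt_coe.mp (show (n : Ordinal) < (m : Ordinal) from Nat.cast_lt.mpr h)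

lemma add_nat_cancel {a : Ordinal} {n m : ℕ} (h : a + (n : Ordinal) = a + m) : n = m := by
  exact_mod_cast (add_right_inj a).mp h

lemma succ_cancel {a b : Ordinal} (h : a + 1 = b + 1) : a = b := by
  rw [Ordinal.add_one_eq_succ, Ordinal.add_one_eq_succ] at h
  exact Order.succ_injective h

lemma add_nat_lt (δ : O1) {n m : ℕ} (h : n < m) : δ.1 + (n : Ordinal) < δ.1 + m :=
  (add_lt_add_iff_left _).mpr (Nat.cast_lt.mpr h)

/-- the sp-column parity condition -/
def SpPat (ζ₁ ζ₂ ζ₃ ζ₄ : O1) : Prop :=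
  (IEven ζ₁ ∧ IOdd ζ₂ ∧ IEven ζ₃ ∧ IOdd ζ₄) ∨
  (IOdd ζ₁ ∧ IEven ζ₂ ∧ IEven ζ₃ ∧ IEven ζ₄) ∨
  (IEven ζ₁ ∧ ¬ ILimit ζ₁ ∧ IEven ζ₂ ∧ IOdd ζ₃ ∧ IOdd ζ₄) ∨
  (((IEven ζ₁ ∧ IOdd ζ₂) ∨ (IOdd ζ₁ ∧ IEven ζ₂)) ∧ ¬ ISucc ζ₁ ζ₂ ∧ IOdd ζ₃ ∧ IOdd ζ₄)

/-- the su-column parity condition -/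
def SuPat (ζ₁ ζ₂ ζ₃ ζ₄ : O1) : Prop :=
  (IEven ζ₁ ∧ IEven ζ₂ ∧ IEven ζ₃ ∧ IEven ζ₄) ∨
  (IOdd ζ₁ ∧ IOdd ζ₂ ∧ IOdd ζ₃ ∧ IOdd ζ₄) ∨
  (IOdd ζ₁ ∧ IEven ζ₂ ∧ IOdd ζ₃ ∧ IEven ζ₄) ∨
  (IOdd ζ₁ ∧ IEven ζ₂ ∧ IEven ζ₃ ∧ IOdd ζ₄) ∨
  (ILimit ζ₁ ∧ IEven ζ₂ ∧ IOdd ζ₃ ∧ IOdd ζ₄) ∨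
  (ISucc ζ₁ ζ₂ ∧ IOdd ζ₃ ∧ IOdd ζ₄)

/-- the sp set -/
def spSet (E : Ordinal → Set ℕ) (X : Set O1) : Set (Finset O1) :=
  {e | 5 ≤ e.card ∨
    (∃ ζ₁ ζ₂ ζ₃ ζ₄ : O1, ζ₁ < ζ₂ ∧ ζ₂ < ζ₃ ∧ ζ₃ < ζ₄ ∧ SpPat ζ₁ ζ₂ ζ₃ ζ₄ ∧
      e = quadF ζ₁ ζ₂ ζ₃ ζ₄) ∨
    (∃ (δ : O1) (ot : Ordinal) (i : ℕ) (x1 x3 x4 xi : O1),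
      ILimit δ ∧ SegType δ ot ∧ IterSucc 1 δ x1 ∧ IterSucc 3 δ x3 ∧ IterSucc 4 δ x4 ∧
      IterSucc (5+i) δ xi ∧ i ∉ E ot ∧ e = quadF x1 x3 x4 xi) ∨
    (∃ ζ : O1, o1 6 < ζ ∧ ζ ∉ X ∧ e = quadF (o1 3) (o1 5) (o1 6) ζ)}

lemma supat_spat_conflict {ζ₁ ζ₂ ζ₃ ζ₄ : O1} (hsu : SuPat ζ₁ ζ₂ ζ₃ ζ₄)
    (hsp : SpPat ζ₁ ζ₂ ζ₃ ζ₄) : False := by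
  rcases hsu with ⟨a1,a2,a3,a4⟩|⟨a1,a2,a3,a4⟩|⟨a1,a2,a3,a4⟩|⟨a1,a2,a3,a4⟩|⟨a1,a2,a3,a4⟩|⟨a12,a3,a4⟩ <;>
    rcases hsp with ⟨b1,b2,b3,b4⟩|⟨b1,b2,b3,b4⟩|⟨b1,b1',b2,b3,b4⟩|⟨b12,b12',b3,b4⟩ <;>
    try rcases b12 with ⟨b1,b2⟩|⟨b1,b2⟩
  all_goals first
    | exact not_even_and_odd ζ₁ ⟨a1,b1⟩ | exact not_even_and_odd ζ₁ ⟨b1,a1⟩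
    | exact not_even_and_odd ζ₂ ⟨a2,b2⟩ | exact not_even_and_odd ζ₂ ⟨b2,a2⟩
    | exact not_even_and_odd ζ₃ ⟨a3,b3⟩ | exact not_even_and_odd ζ₃ ⟨b3,a3⟩
    | exact not_even_and_odd ζ₄ ⟨a4,b4⟩ | exact not_even_and_odd ζ₄ ⟨b4,a4⟩
    | exact not_even_and_odd ζ₁ ⟨ilimit_even a1, b1⟩
    | exact not_even_and_odd ζ₂ ⟨b2, isucc_even_odd a12 b1⟩
    | exact b1' a1
    | exact b12' a12

/-- SuPat fails on the tuple (δ+1, δ+3, δ+4, ·) coming from a sp E-quadruple;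
but here we only need that SpPat fails on (odd, odd, even, ·)-tuples -/
lemma spat_ooe {x1 x3 x4 xi : O1} (h1 : IOdd x1) (h3 : IOdd x3)
    (hsp : SpPat x1 x3 x4 xi) : False := by
  rcases hsp with ⟨b1,b2,b3,b4⟩|⟨b1,b2,b3,b4⟩|⟨b1,b1',b2,b3,b4⟩|⟨b12,b12',b3,b4⟩
  · exact not_even_and_odd x1 ⟨b1,h1⟩
  · exact not_even_and_odd x3 ⟨b2,h3⟩
  · exact not_even_and_odd x1 ⟨b1,h1⟩
  · rcases b12 with ⟨b1,b2⟩|⟨b1,b2⟩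
    · exact not_even_and_odd x1 ⟨b1,h1⟩
    · exact not_even_and_odd x3 ⟨b2,h3⟩

lemma delta_plus_one_ne_three {δ : O1} (hδ : ILimit δ) (h : δ.1 + ((1:ℕ) : Ordinal) = (o1 3).1) :
    False := by
  have h3 : ((3:ℕ) : Ordinal) = ((2:ℕ) : Ordinal) + 1 := by norm_cast
  have h2 : δ.1 = ((2:ℕ) : Ordinal) := by
    apply succ_cancel
    rw [← h3]
    simpa [o1] using h
  refine (ilimit_iff δ).mp hδ ((1:ℕ) : Ordinal) ?_
  rw [h2]; norm_cast

/-- SuPat fails on the tuple (3, 5, 6, ζ) -/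
lemma supat_x {ζ : O1} (hsu : SuPat (o1 3) (o1 5) (o1 6) ζ) : False := by
  have o3 : IOdd (o1 3) := iodd_nat (by decide)
  have o5 : IOdd (o1 5) := iodd_nat (by decide)
  have e6 : IEven (o1 6) := ieven_nat (by decide)
  rcases hsu with ⟨a1,a2,a3,a4⟩|⟨a1,a2,a3,a4⟩|⟨a1,a2,a3,a4⟩|⟨a1,a2,a3,a4⟩|⟨a1,a2,a3,a4⟩|⟨a12,a3,a4⟩
  · exact not_even_and_odd _ ⟨a1, o3⟩
  · exact not_even_and_odd _ ⟨e6, a3⟩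
  · exact not_even_and_odd _ ⟨e6, a3⟩
  · exact not_even_and_odd _ ⟨a2, o5⟩
  · exact not_ilimit_nat (by norm_num) a1
  · have := (isucc_iff _ _).mp a12
    simp only [o1] at this
    have h4 : ((5:ℕ) : Ordinal) = ((4:ℕ) : Ordinal) := by
      rw [this]; norm_cast
    exact absurd (Nat.cast_inj.mp h4) (by norm_num)

/-- SpPat fails on the tuple (3, 5, 6, ζ) -/
lemma spat_x {ζ : O1} (hsp : SpPat (o1 3) (o1 5) (o1 6) ζ) : False :=
  spat_ooe (iodd_nat (by decide)) (iodd_nat (by decide)) hsp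

/-- SuPat fails against an E-tuple -/
lemma supat_equad {δ : O1} {ζ₁ ζ₂ ζ₃ ζ₄ : O1} (hδ : ILimit δ)
    (e1 : ζ₁.1 = δ.1 + ((1:ℕ) : Ordinal)) (e2 : ζ₂.1 = δ.1 + ((3:ℕ) : Ordinal))
    (e3 : ζ₃.1 = δ.1 + ((4:ℕ) : Ordinal))
    (hsu : SuPat ζ₁ ζ₂ ζ₃ ζ₄) : False := by
  have o1' : IOdd ζ₁ := (iodd_iff _).mpr ⟨δ, 1, hδ, odd_one, e1⟩
  have o2' : IOdd ζ₂ := (iodd_iff _).mpr ⟨δ, 3, hδ, by decide, e2⟩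
  have e3' : IEven ζ₃ := (ieven_iff _).mpr ⟨δ, 4, hδ, by decide, e3⟩
  rcases hsu with ⟨a1,a2,a3,a4⟩|⟨a1,a2,a3,a4⟩|⟨a1,a2,a3,a4⟩|⟨a1,a2,a3,a4⟩|⟨a1,a2,a3,a4⟩|⟨a12,a3,a4⟩
  · exact not_even_and_odd _ ⟨a1, o1'⟩
  · exact not_even_and_odd _ ⟨e3', a3⟩
  · exact not_even_and_odd _ ⟨a2, o2'⟩
  · exact not_even_and_odd _ ⟨a2, o2'⟩
  · exact (ilimit_iff ζ₁).mp a1 δ.1 (by simpa using e1)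
  · have h := (isucc_iff _ _).mp a12
    rw [e1, e2] at h
    have : ((3:ℕ) : Ordinal) = ((2:ℕ) : Ordinal) := by
      apply (add_right_inj δ.1).mp
      rw [h]
      push_cast
      rw [add_assoc]
      norm_num
    exact absurd (Nat.cast_inj.mp this) (by norm_num)

end SPE

namespace SPE

variable {E : Ordinal → Set ℕ} {X : Set O1}

lemma equad_coords {δ x1 x3 x4 xi : O1} {i : ℕ}
    (h1 : IterSucc 1 δ x1) (h3 : IterSucc 3 δ x3) (h4 : IterSucc 4 δ x4)
    (hi : IterSucc (5+i) δ xi) :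
    x1.1 = δ.1 + ((1:ℕ):Ordinal) ∧ x3.1 = δ.1 + ((3:ℕ):Ordinal) ∧
    x4.1 = δ.1 + ((4:ℕ):Ordinal) ∧ xi.1 = δ.1 + ((5+i:ℕ):Ordinal) ∧
    x1 < x3 ∧ x3 < x4 ∧ x4 < xi := by
  have c1 := (itersucc_iff _ _ _).mp h1
  have c3 := (itersucc_iff _ _ _).mp h3
  have c4 := (itersucc_iff _ _ _).mp h4
  have ci := (itersucc_iff _ _ _).mp hi
  refine ⟨c1, c3, c4, ci, ?_, ?_, ?_⟩
  · exact Subtype.coe_lt_coe.mp (by rw [c1, c3]; exact add_nat_lt δ (by norm_num))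
  · exact Subtype.coe_lt_coe.mp (by rw [c3, c4]; exact add_nat_lt δ (by norm_num))
  · exact Subtype.coe_lt_coe.mp (by rw [c4, ci]; exact add_nat_lt δ (by omega))

lemma mem_spSet_card {e : Finset O1} (h : e ∈ spSet E X) : 4 ≤ e.card := by
  simp only [spSet, Set.mem_setOf_eq] at h
  rcases h with hc | ⟨ζ₁,ζ₂,ζ₃,ζ₄,t1,t2,t3,_,rfl⟩ | ⟨δ,ot,i,x1,x3,x4,xi,_,_,i1,i3,i4,ii,_,rfl⟩
    | ⟨ζ,hζ,_,rfl⟩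
  · omega
  · rw [quadF_card t1 t2 t3]
  · obtain ⟨-,-,-,-,s1,s2,s3⟩ := equad_coords i1 i3 i4 ii
    rw [quadF_card s1 s2 s3]
  · rw [quadF_card (o1_lt (by norm_num)) (o1_lt (by norm_num)) hζ]

lemma supat_not_mem {ζ₁ ζ₂ ζ₃ ζ₄ : O1} (s1 : ζ₁ < ζ₂) (s2 : ζ₂ < ζ₃) (s3 : ζ₃ < ζ₄)
    (hsu : SuPat ζ₁ ζ₂ ζ₃ ζ₄) : quadF ζ₁ ζ₂ ζ₃ ζ₄ ∉ spSet E X := by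
  intro h
  simp only [spSet, Set.mem_setOf_eq] at h
  rcases h with hc | ⟨η₁,η₂,η₃,η₄,t1,t2,t3,hsp,heq⟩
    | ⟨δ,ot,i,x1,x3,x4,xi,hδ,hseg,i1,i3,i4,ii,hnE,heq⟩ | ⟨ζ,hζ,hnX,heq⟩
  · rw [quadF_card s1 s2 s3] at hc; omega
  · obtain ⟨rfl,rfl,rfl,rfl⟩ := quadF_inj s1 s2 s3 t1 t2 t3 heq
    exact supat_spat_conflict hsu hsp
  · obtain ⟨c1,c3,c4,ci,u1,u2,u3⟩ := equad_coords i1 i3 i4 ii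
    obtain ⟨rfl,rfl,rfl,rfl⟩ := quadF_inj s1 s2 s3 u1 u2 u3 heq
    exact supat_equad hδ c1 c3 c4 hsu
  · obtain ⟨rfl,rfl,rfl,rfl⟩ :=
      quadF_inj s1 s2 s3 (o1_lt (by norm_num)) (o1_lt (by norm_num)) hζ heq
    exact supat_x hsu

lemma equad_not_mem {δ : O1} {ot : Ordinal} {i : ℕ} {x1 x3 x4 xi : O1}
    (hδ : ILimit δ) (hseg : SegType δ ot) (i1 : IterSucc 1 δ x1) (i3 : IterSucc 3 δ x3)
    (i4 : IterSucc 4 δ x4) (ii : IterSucc (5+i) δ xi) (hiE : i ∈ E ot) :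
    quadF x1 x3 x4 xi ∉ spSet E X := by
  intro h
  obtain ⟨c1,c3,c4,ci,u1,u2,u3⟩ := equad_coords i1 i3 i4 ii
  have ox1 : IOdd x1 := (iodd_iff _).mpr ⟨δ, 1, hδ, odd_one, c1⟩
  have ox3 : IOdd x3 := (iodd_iff _).mpr ⟨δ, 3, hδ, by decide, c3⟩
  simp only [spSet, Set.mem_setOf_eq] at h
  rcases h with hc | ⟨η₁,η₂,η₃,η₄,t1,t2,t3,hsp,heq⟩
    | ⟨δ',ot',i',x1',x3',x4',xi',hδ',hseg',i1',i3',i4',ii',hnE,heq⟩ | ⟨ζ,hζ,hnX,heq⟩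
  · rw [quadF_card u1 u2 u3] at hc; omega
  · obtain ⟨rfl,rfl,rfl,rfl⟩ := quadF_inj u1 u2 u3 t1 t2 t3 heq
    exact spat_ooe ox1 ox3 hsp
  · obtain ⟨c1',c3',c4',ci',v1,v2,v3⟩ := equad_coords i1' i3' i4' ii'
    obtain ⟨r1,r2,r3,r4⟩ := quadF_inj u1 u2 u3 v1 v2 v3 heq
    have hδδ : δ.1 = δ'.1 := by
      apply succ_cancel
      have := c1' ▸ (r1 ▸ c1 : x1'.1 = δ.1 + ((1:ℕ):Ordinal))
      simpa using this.symm
    have hot : ot = ot' := segtype_unique hseg (by rw [Subtype.ext hδδ]; exact hseg')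
    have hii : i = i' := by
      have := ci' ▸ (r4 ▸ ci : xi'.1 = δ.1 + ((5+i:ℕ):Ordinal))
      rw [← hδδ] at this
      have := add_nat_cancel this.symm
      omega
    exact hnE (hot ▸ hii ▸ hiE)
  · obtain ⟨r1,r2,r3,r4⟩ :=
      quadF_inj u1 u2 u3 (o1_lt (by norm_num)) (o1_lt (by norm_num)) hζ heq
    exact delta_plus_one_ne_three hδ (by rw [← c1, r1])

lemma xquad_mem_iff {ζ : O1} (hζ : o1 6 < ζ) :
    quadF (o1 3) (o1 5) (o1 6) ζ ∈ spSet E X ↔ ζ ∉ X := by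
  have w1 : o1 3 < o1 5 := o1_lt (by norm_num)
  have w2 : o1 5 < o1 6 := o1_lt (by norm_num)
  constructor
  · intro h
    simp only [spSet, Set.mem_setOf_eq] at h
    rcases h with hc | ⟨η₁,η₂,η₃,η₄,t1,t2,t3,hsp,heq⟩
      | ⟨δ,ot,i,x1,x3,x4,xi,hδ,hseg,i1,i3,i4,ii,hnE,heq⟩ | ⟨ζ',hζ',hnX,heq⟩
    · rw [quadF_card w1 w2 hζ] at hc; omega
    · obtain ⟨r1,r2,r3,r4⟩ := quadF_inj w1 w2 hζ t1 t2 t3 heq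
      rw [← r1, ← r2, ← r3, ← r4] at hsp
      exact absurd hsp (fun hh => spat_x hh)
    · obtain ⟨c1,c3,c4,ci,v1,v2,v3⟩ := equad_coords i1 i3 i4 ii
      obtain ⟨r1,r2,r3,r4⟩ := quadF_inj w1 w2 hζ v1 v2 v3 heq
      exact absurd (by rw [← c1, ← r1]) (fun hh => delta_plus_one_ne_three hδ hh)
    · obtain ⟨-,-,-,r4⟩ := quadF_inj w1 w2 hζ w1 w2 hζ' heq
      rw [r4]; exact hnX
  · intro h
    exact Or.inr (Or.inr (Or.inr ⟨ζ, hζ, h, rfl⟩))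

end SPE

/-- for every `X ⊆ ω₁` whose elements are all `> 6` there is a simple
pattern `(su, sp)` over ω₁ such that `{3,5,6,ζ} ∈ su ↔ ζ ∈ X` for all `6 < ζ < ω₁`. -/
theorem exists_simple_pattern_encoding (E : Ordinal → Set ℕ) (hE : GoodCodes E)
    (X : Set O1) (hX : ∀ ζ ∈ X, o1 6 < ζ) :
    ∃ su sp : Set (Finset O1), IsSimplePatternI O1 E su sp ∧
      ∀ ζ : O1, o1 6 < ζ → (quadF (o1 3) (o1 5) (o1 6) ζ ∈ su ↔ ζ ∈ X) := by
  refine ⟨{e | e.Nonempty ∧ e ∉ SPE.spSet E X}, SPE.spSet E X,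
    ⟨⟨?_, ?_, rfl⟩, ?_, ?_, ?_, ?_, ?_, ?_⟩, ?_⟩
  · intro e he
    have := SPE.mem_spSet_card he
    exact Finset.card_pos.mp (by omega)
  · intro e he e' hsub
    by_cases h : e = e'
    · exact h ▸ he
    · have h4 := SPE.mem_spSet_card he
      have hlt := Finset.card_lt_card (Finset.ssubset_iff_subset_ne.mpr ⟨hsub, h⟩)
      exact Or.inl (by omega)
  · intro e hne hc
    exact ⟨hne, fun hmem => by have := SPE.mem_spSet_card hmem; omega⟩
  · intro ζ₁ ζ₂ ζ₃ ζ₄ s1 s2 s3 hcond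
    exact ⟨SPE.quadF_nonempty, SPE.supat_not_mem s1 s2 s3 hcond⟩
  · intro δ ot i x1 x3 x4 xi hδ hseg i1 i3 i4 ii hiE
    exact ⟨SPE.quadF_nonempty, SPE.equad_not_mem hδ hseg i1 i3 i4 ii hiE⟩
  · intro e hc
    exact Or.inl hc
  · intro ζ₁ ζ₂ ζ₃ ζ₄ s1 s2 s3 hcond
    exact Or.inr (Or.inl ⟨ζ₁, ζ₂, ζ₃, ζ₄, s1, s2, s3, hcond, rfl⟩)
  · intro δ ot i x1 x3 x4 xi hδ hseg i1 i3 i4 ii hiE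
    exact Or.inr (Or.inr (Or.inl ⟨δ, ot, i, x1, x3, x4, xi, hδ, hseg, i1, i3, i4, ii, hiE, rfl⟩))
  · intro ζ hζ
    constructor
    · rintro ⟨-, hnot⟩
      by_contra hX
      exact hnot ((SPE.xquad_mem_iff hζ).mpr hX)
    · intro hX
      exact ⟨SPE.quadF_nonempty, fun hmem => (SPE.xquad_mem_iff hζ).mp hmem hX⟩
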